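/- Let a ≤ 0 and b ≤ 0 be integers and let s > 1 be an integer of the same parity as b. Then for every irrational real number τ there exist ε > 0 and a polynomial p with rational coefficients such that for every irrational real τ' with |τ' − τ| < ε, one has Σ_{n=1}^∞ cos(πnτ')^{-a} · sin(πnτ')^{-b} / n^s = π^s · p(τ'). (In other words, ψ_s^{a,b} is π^s times a piecewise polynomial with rational coefficients.) -/

import Mathlib

open Real
open scoped Nat

/-- Family of basic trig functions: cosines (p = false) or sines (p = true). -/
noncomputable def trigE (p : Bool) (k : ℤ) (x : ℝ) : ℝ :=
  if p then Real.sin ((k : ℝ) * x) else Real.cos ((k : ℝ) * x)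

lemma cos_mul_trigE (p : Bool) (k : ℤ) (x : ℝ) :
    Real.cos x * trigE p k x = (trigE p (k + 1) x + trigE p (k - 1) x) / 2 := by
  cases p <;> simp only [trigE, if_true, if_false] <;> push_cast <;>
    rw [add_mul, sub_mul, one_mul] <;>
    [rw [Real.cos_add, Real.cos_sub]; rw [Real.sin_add, Real.sin_sub]] <;> ring

lemma sin_mul_trigE (p : Bool) (k : ℤ) (x : ℝ) :
    Real.sin x * trigE p k x =
      (if p then (trigE false (k - 1) x - trigE false (k + 1) x)
       else (trigE true (k + 1) x - trigE true (k - 1) x)) / 2 := by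
  cases p <;> simp only [trigE, if_true, if_false] <;> push_cast <;>
    rw [add_mul, sub_mul, one_mul] <;>
    [rw [Real.sin_add, Real.sin_sub]; rw [Real.cos_sub, Real.cos_add]] <;> ring

lemma support_mul_trigE (c : ℤ → ℚ) (hc : (Function.support c).Finite) (f : ℤ → ℝ) :
    (Function.support fun k => (c k : ℝ) * f k).Finite := by
  refine hc.subset fun k hk => ?_
  simp only [Function.mem_support] at hk ⊢
  intro h; apply hk; rw [h]; simp

lemma support_shift (c : ℤ → ℚ) (hc : (Function.support c).Finite) (d : ℤ) :
    (Function.support fun k => c (k + d)).Finite := by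
  have : (Function.support fun k => c (k + d)) = (fun k : ℤ => k + d) ⁻¹' Function.support c := by
    ext k; simp [Function.mem_support]
  rw [this]
  exact Set.Finite.preimage (Set.injOn_of_injective (add_left_injective d)) hc

lemma finsum_shift (g : ℤ → ℝ) (d : ℤ) : (∑ᶠ k : ℤ, g (k + d)) = ∑ᶠ k : ℤ, g k :=
  finsum_comp_equiv (Equiv.addRight d)

/-- Generic step: multiplying a trig combination by a function `g` satisfying a
product-to-sum formula. -/
lemma step_gen (p q : Bool) (u v : ℚ) (g : ℝ → ℝ)
    (hg : ∀ (k : ℤ) (x : ℝ), g x * trigE p k x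
      = (u : ℝ) * trigE q (k + 1) x + (v : ℝ) * trigE q (k - 1) x)
    (c : ℤ → ℚ) (hc : (Function.support c).Finite) :
    ∃ c' : ℤ → ℚ, (Function.support c').Finite ∧ ∀ x : ℝ,
      g x * ∑ᶠ k : ℤ, (c k : ℝ) * trigE p k x = ∑ᶠ k : ℤ, (c' k : ℝ) * trigE q k x := by
  refine ⟨fun k => u * c (k - 1) + v * c (k + 1), ?_, ?_⟩
  · refine ((support_shift c hc (-1)).union (support_shift c hc 1)).subset fun k hk => ?_
    simp only [Function.mem_support] at hk ⊢
    by_contra h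
    simp only [Set.mem_union, Function.mem_support, not_or, not_not] at h
    obtain ⟨h1, h2⟩ := h
    apply hk
    rw [show k - 1 = k + (-1) by ring, h1, h2]; norm_num
  · intro x
    rw [mul_finsum]
    have e1 : ∀ k : ℤ, g x * ((c k : ℝ) * trigE p k x)
        = ((u * c k : ℚ) : ℝ) * trigE q (k + 1) x + ((v * c k : ℚ) : ℝ) * trigE q (k - 1) x := by
      intro k
      rw [mul_left_comm, hg]; push_cast; ring
    calc (∑ᶠ k : ℤ, g x * ((c k : ℝ) * trigE p k x))
        = ∑ᶠ k : ℤ, (((u * c k : ℚ) : ℝ) * trigE q (k + 1) x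
            + ((v * c k : ℚ) : ℝ) * trigE q (k - 1) x) := finsum_congr e1
      _ = (∑ᶠ k : ℤ, ((u * c k : ℚ) : ℝ) * trigE q (k + 1) x)
            + ∑ᶠ k : ℤ, ((v * c k : ℚ) : ℝ) * trigE q (k - 1) x := by
          refine finsum_add_distrib ?_ ?_ <;>
          · refine hc.subset fun k hk => ?_
            simp only [Function.mem_support] at hk ⊢
            intro h; apply hk; rw [h]; simp
      _ = (∑ᶠ k : ℤ, ((u * c (k - 1) : ℚ) : ℝ) * trigE q k x)
            + ∑ᶠ k : ℤ, ((v * c (k + 1) : ℚ) : ℝ) * trigE q k x := by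
          congr 1
          · rw [← finsum_shift (fun k => ((u * c (k - 1) : ℚ) : ℝ) * trigE q k x) 1]
            exact finsum_congr fun k => by rw [add_sub_cancel_right]
          · rw [← finsum_shift (fun k => ((v * c (k + 1) : ℚ) : ℝ) * trigE q k x) (-1)]
            exact finsum_congr fun k => by
              rw [show k + -1 + 1 = k by ring, show k + -1 = k - 1 by ring]
      _ = ∑ᶠ k : ℤ, ((u * c (k - 1) + v * c (k + 1) : ℚ) : ℝ) * trigE q k x := by
          rw [← finsum_add_distrib]
          · exact finsum_congr fun k => by push_cast; ring
          · refine (support_shift c hc (-1)).subset fun k hk => ?_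
            simp only [Function.mem_support] at hk ⊢
            rw [show k + (-1) = k - 1 by ring]
            intro h; apply hk; rw [h]; simp
          · refine (support_shift c hc 1).subset fun k hk => ?_
            simp only [Function.mem_support] at hk ⊢
            intro h; apply hk; rw [h]; simp

lemma step_cos (p : Bool) (c : ℤ → ℚ) (hc : (Function.support c).Finite) :
    ∃ c' : ℤ → ℚ, (Function.support c').Finite ∧ ∀ x : ℝ,
      Real.cos x * ∑ᶠ k : ℤ, (c k : ℝ) * trigE p k x = ∑ᶠ k : ℤ, (c' k : ℝ) * trigE p k x := by
  refine step_gen p p (1/2) (1/2) Real.cos (fun k x => ?_) c hc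
  rw [cos_mul_trigE]; push_cast; ring

lemma step_sin (p : Bool) (c : ℤ → ℚ) (hc : (Function.support c).Finite) :
    ∃ c' : ℤ → ℚ, (Function.support c').Finite ∧ ∀ x : ℝ,
      Real.sin x * ∑ᶠ k : ℤ, (c k : ℝ) * trigE p k x = ∑ᶠ k : ℤ, (c' k : ℝ) * trigE (!p) k x := by
  cases p
  · refine step_gen false true (1/2) (-(1/2)) Real.sin (fun k x => ?_) c hc
    rw [sin_mul_trigE]; simp only [if_false, Bool.false_eq_true]; push_cast; ring
  · refine step_gen true false (-(1/2)) (1/2) Real.sin (fun k x => ?_) c hc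
    rw [sin_mul_trigE]; simp only [if_true]; push_cast; ring

/-- Expansion of `cos^A * sin^B` as a finite rational combination of `cos (k x)`
(if `B` is even) or `sin (k x)` (if `B` is odd). -/
lemma trig_expand (A B : ℕ) : ∃ c : ℤ → ℚ, (Function.support c).Finite ∧ ∀ x : ℝ,
    Real.cos x ^ A * Real.sin x ^ B = ∑ᶠ k : ℤ, (c k : ℝ) * trigE (Nat.bodd B) k x := by
  induction B generalizing A with
  | zero =>
    induction A with
    | zero =>
      refine ⟨fun k => if k = 0 then 1 else 0, ?_, fun x => ?_⟩
      · exact (Set.finite_singleton 0).subset fun k hk => by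
          simp only [Function.mem_support, ne_eq, ite_eq_right_iff] at hk
          push_neg at hk
          simp [hk.1]
      · rw [finsum_eq_single _ (0 : ℤ) (fun k hk => by simp [hk])]
        simp [trigE]
    | succ A ih =>
      obtain ⟨c, hc, hrep⟩ := ih
      obtain ⟨c', hc', hrep'⟩ := step_cos (Nat.bodd 0) c hc
      refine ⟨c', hc', fun x => ?_⟩
      rw [show Real.cos x ^ (A + 1) * Real.sin x ^ 0
          = Real.cos x * (Real.cos x ^ A * Real.sin x ^ 0) by ring, hrep, hrep']
  | succ B ih =>
    obtain ⟨c, hc, hrep⟩ := ih A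
    obtain ⟨c', hc', hrep'⟩ := step_sin (Nat.bodd B) c hc
    refine ⟨c', hc', fun x => ?_⟩
    rw [show Real.cos x ^ A * Real.sin x ^ (B + 1)
        = Real.sin x * (Real.cos x ^ A * Real.sin x ^ B) by ring, hrep, hrep']
    simp [Nat.bodd_succ]

lemma floor_stable {y y' : ℝ} (h : |y' - y| < min (Int.fract y) (1 - Int.fract y)) :
    ⌊y'⌋ = ⌊y⌋ := by
  have h1 : |y' - y| < Int.fract y := lt_of_lt_of_le h (min_le_left _ _)
  have h2 : |y' - y| < 1 - Int.fract y := lt_of_lt_of_le h (min_le_right _ _)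
  have hf : y - (⌊y⌋ : ℝ) = Int.fract y := Int.self_sub_floor y
  rw [abs_lt] at h1 h2
  rw [Int.floor_eq_iff]
  constructor
  · linarith
  · linarith

/-- Rational constant in the Bernoulli evaluation of trigonometric Dirichlet sums. -/
def trigConst (S : ℕ) : ℚ := (-1) ^ (S / 2 + 1) * 2 ^ S / 2 / (S)!

lemma bernoulliFun_eq_aeval (S : ℕ) (y : ℝ) :
    bernoulliFun S y = Polynomial.aeval y (Polynomial.bernoulli S) := by
  rw [bernoulliFun, Polynomial.aeval_def, Polynomial.eval_map]

lemma hasSum_cos_term (m : ℕ) (hm : m ≠ 0) (k N : ℤ) (y : ℝ) (hN : ⌊(k : ℝ) * y / 2⌋ = N) :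
    HasSum (fun n : ℕ => Real.cos ((k : ℝ) * (π * ((n : ℝ) + 1) * y)) / ((n : ℝ) + 1) ^ (2 * m))
      ((-1 : ℝ) ^ (m + 1) * (2 * π) ^ (2 * m) / 2 / (2 * m)! *
        bernoulliFun (2 * m) ((k : ℝ) * y / 2 - (N : ℝ))) := by
  set x0 : ℝ := (k : ℝ) * y / 2 - (N : ℝ) with hx0
  have hfr : Int.fract ((k : ℝ) * y / 2) = x0 := by
    rw [← Int.self_sub_floor, hN]
  have hx : x0 ∈ Set.Icc (0 : ℝ) 1 := by
    refine ⟨?_, ?_⟩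
    · rw [← hfr]; exact Int.fract_nonneg _
    · rw [← hfr]; exact (Int.fract_lt_one _).le
  have H := hasSum_one_div_nat_pow_mul_cos (k := m) hm hx
  have H1 := (hasSum_nat_add_iff'
    (f := fun n : ℕ => 1 / (n : ℝ) ^ (2 * m) * Real.cos (2 * π * n * x0)) 1).mpr H
  rw [Finset.range_one, Finset.sum_singleton] at H1
  simp only [Nat.cast_zero, zero_pow (by omega : 2 * m ≠ 0), div_zero, zero_mul, sub_zero] at H1
  refine H1.congr_fun fun n => ?_
  have harg : 2 * π * ((n : ℝ) + 1) * x0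
      = (k : ℝ) * (π * ((n : ℝ) + 1) * y) - (((n : ℕ) + 1) * N : ℤ) * (2 * π) := by
    rw [hx0]; push_cast; ring
  push_cast
  rw [harg, Real.cos_sub_int_mul_two_pi, one_div_mul_eq_div]

lemma hasSum_sin_term (m : ℕ) (hm : m ≠ 0) (k N : ℤ) (y : ℝ) (hN : ⌊(k : ℝ) * y / 2⌋ = N) :
    HasSum (fun n : ℕ => Real.sin ((k : ℝ) * (π * ((n : ℝ) + 1) * y)) / ((n : ℝ) + 1) ^ (2 * m + 1))
      ((-1 : ℝ) ^ (m + 1) * (2 * π) ^ (2 * m + 1) / 2 / (2 * m + 1)! *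
        bernoulliFun (2 * m + 1) ((k : ℝ) * y / 2 - (N : ℝ))) := by
  set x0 : ℝ := (k : ℝ) * y / 2 - (N : ℝ) with hx0
  have hfr : Int.fract ((k : ℝ) * y / 2) = x0 := by
    rw [← Int.self_sub_floor, hN]
  have hx : x0 ∈ Set.Icc (0 : ℝ) 1 := by
    refine ⟨?_, ?_⟩
    · rw [← hfr]; exact Int.fract_nonneg _
    · rw [← hfr]; exact (Int.fract_lt_one _).le
  have H := hasSum_one_div_nat_pow_mul_sin (k := m) hm hx
  have H1 := (hasSum_nat_add_iff'
    (f := fun n : ℕ => 1 / (n : ℝ) ^ (2 * m + 1) * Real.sin (2 * π * n * x0)) 1).mpr H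
  rw [Finset.range_one, Finset.sum_singleton] at H1
  simp only [Nat.cast_zero, zero_pow (by omega : 2 * m + 1 ≠ 0), div_zero, zero_mul,
    sub_zero] at H1
  refine H1.congr_fun fun n => ?_
  push_cast
  have harg : 2 * π * ((n : ℝ) + 1) * x0
      = (k : ℝ) * (π * ((n : ℝ) + 1) * y) - (((n : ℕ) + 1) * N : ℤ) * (2 * π) := by
    rw [hx0]; push_cast; ring
  rw [harg, Real.sin_sub_int_mul_two_pi, one_div_mul_eq_div]

/-- Unified Bernoulli evaluation of the basic trigonometric Dirichlet sums. -/
lemma trig_hasSum (pb : Bool) (S : ℕ) (hS2 : 2 ≤ S) (hpar : Nat.bodd S = pb)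
    (k N : ℤ) (y : ℝ) (hN : ⌊(k : ℝ) * y / 2⌋ = N) :
    HasSum (fun n : ℕ => trigE pb k (π * ((n : ℝ) + 1) * y) / ((n : ℝ) + 1) ^ S)
      (π ^ S * ((trigConst S : ℝ) * bernoulliFun S ((k : ℝ) * y / 2 - (N : ℝ)))) := by
  have hmod := Nat.mod_two_of_bodd S
  cases pb with
  | false =>
    replace hmod : S % 2 = 0 := by rw [hpar] at hmod; simpa using hmod
    have hSm : S = 2 * (S / 2) := by omega
    have hm : S / 2 ≠ 0 := by omega
    have H := hasSum_cos_term (S / 2) hm k N y hN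
    rw [← hSm] at H
    have H2 := H.congr_fun
      (g := fun n : ℕ => trigE false k (π * ((n : ℝ) + 1) * y) / ((n : ℝ) + 1) ^ S)
      (fun n => by simp [trigE])
    convert H2 using 1
    rw [trigConst]
    push_cast
    rw [mul_pow]
    ring
  | true =>
    replace hmod : S % 2 = 1 := by rw [hpar] at hmod; simpa using hmod
    have hSm : S = 2 * (S / 2) + 1 := by omega
    have hm : S / 2 ≠ 0 := by omega
    have H := hasSum_sin_term (S / 2) hm k N y hN
    rw [← hSm] at H
    have H2 := H.congr_fun
      (g := fun n : ℕ => trigE true k (π * ((n : ℝ) + 1) * y) / ((n : ℝ) + 1) ^ S)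
      (fun n => by simp [trigE])
    convert H2 using 1
    rw [trigConst]
    push_cast
    rw [mul_pow]
    ring

lemma floor_near (τ : ℝ) (hτ : Irrational τ) (k : ℤ) :
    ∃ δ : ℝ, 0 < δ ∧ ∀ τ' : ℝ, |τ' - τ| < δ →
      ⌊(k : ℝ) * τ' / 2⌋ = ⌊(k : ℝ) * τ / 2⌋ := by
  rcases eq_or_ne k 0 with rfl | hk
  · exact ⟨1, one_pos, fun τ' _ => by simp⟩
  · have hy : Irrational ((k : ℝ) * τ / 2) := by
      have := (hτ.intCast_mul hk).div_intCast (m := 2) (by norm_num)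
      simpa using this
    set y := (k : ℝ) * τ / 2 with hydef
    have hfr : 0 < Int.fract y := Int.fract_pos.mpr (hy.ne_int _)
    have hfr1 : Int.fract y < 1 := Int.fract_lt_one y
    have hMpos : 0 < min (Int.fract y) (1 - Int.fract y) := lt_min hfr (by linarith)
    refine ⟨min (Int.fract y) (1 - Int.fract y) / ((k.natAbs : ℝ) + 1), by positivity,
      fun τ' h => ?_⟩
    refine floor_stable ?_
    have hdiff : (k : ℝ) * τ' / 2 - y = (k : ℝ) * (τ' - τ) / 2 := by rw [hydef]; ring
    have habs : |(k : ℝ) * τ' / 2 - y| = (k.natAbs : ℝ) * |τ' - τ| / 2 := by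
      rw [hdiff, abs_div, abs_mul, abs_two, ← Int.cast_abs, Int.abs_eq_natAbs, Int.cast_natCast]
    rw [habs]
    set M := min (Int.fract y) (1 - Int.fract y)
    set q := (k.natAbs : ℝ)
    have hq0 : 0 ≤ q := Nat.cast_nonneg _
    have habn : 0 ≤ |τ' - τ| := abs_nonneg _
    have h1 : |τ' - τ| * (q + 1) < M := by
      rw [← lt_div_iff₀ (by positivity)] at *
      exact h
    nlinarith

/-- For integers a ≤ 0, b ≤ 0 and s > 1 of the same parity as b,
the series ψ_s^{a,b}(τ) is π^s times a piecewise polynomial with rational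
coefficients: around any irrational τ there is a single rational polynomial
giving the value at all nearby irrationals. -/
theorem trig_dirichlet_piecewise_polynomial
    (a b s : ℤ) (ha : a ≤ 0) (hb : b ≤ 0) (hs : 1 < s) (hpar : s % 2 = b % 2) :
    ∀ τ : ℝ, Irrational τ →
      ∃ ε : ℝ, 0 < ε ∧ ∃ p : Polynomial ℚ,
        ∀ τ' : ℝ, Irrational τ' → |τ' - τ| < ε →
          ∑' n : ℕ, (Real.cos (π * (n + 1) * τ')) ^ (-a) * (Real.sin (π * (n + 1) * τ')) ^ (-b)
              / ((n : ℝ) + 1) ^ s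
            = π ^ s * (Polynomial.aeval τ' p) := by
  intro τ hτ
  obtain ⟨c, hc, hrep⟩ := trig_expand (-a).toNat (-b).toNat
  set A := (-a).toNat with hAdef
  set B := (-b).toNat with hBdef
  set S := s.toNat with hSdef
  have hSs : (S : ℤ) = s := Int.toNat_of_nonneg (by omega)
  have hBb : (B : ℤ) = -b := Int.toNat_of_nonneg (by omega)
  have hAa : (A : ℤ) = -a := Int.toNat_of_nonneg (by omega)
  have hS2 : 2 ≤ S := by omega
  have hparS : Nat.bodd S = Nat.bodd B := by
    have h2 : S % 2 = B % 2 := by omega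
    have e1 := Nat.mod_two_of_bodd S
    have e2 := Nat.mod_two_of_bodd B
    cases hbS : Nat.bodd S <;> cases hbB : Nat.bodd B <;> simp_all
  set F : Finset ℤ := hc.toFinset with hF
  choose δf hδpos hδf using floor_near τ hτ
  set F' : Finset ℤ := insert 0 F with hF'
  refine ⟨F'.inf' (Finset.insert_nonempty _ _) δf, ?_, ?_⟩
  · rw [Finset.lt_inf'_iff]; exact fun k _ => hδpos k
  set N : ℤ → ℤ := fun k => ⌊(k : ℝ) * τ / 2⌋ with hNdef
  refine ⟨∑ k ∈ F, Polynomial.C (c k * trigConst S) *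
    ((Polynomial.bernoulli S).comp (Polynomial.C ((k : ℚ) / 2) * Polynomial.X
      - Polynomial.C ((N k : ℚ)))), fun τ' hτ' hclose => ?_⟩
  have hfloor : ∀ k ∈ F, ⌊(k : ℝ) * τ' / 2⌋ = N k := fun k hk =>
    hδf k τ' (lt_of_lt_of_le hclose (Finset.inf'_le _ (Finset.mem_insert_of_mem hk)))
  have hterm : ∀ k ∈ F, HasSum
      (fun n : ℕ => (c k : ℝ) * trigE (Nat.bodd B) k (π * ((n : ℝ) + 1) * τ')
        / ((n : ℝ) + 1) ^ S)
      ((c k : ℝ) * (π ^ S * ((trigConst S : ℝ)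
        * bernoulliFun S ((k : ℝ) * τ' / 2 - (N k : ℝ))))) := by
    intro k hk
    have := (trig_hasSum (Nat.bodd B) S hS2 hparS k (N k) τ' (hfloor k hk)).mul_left ((c k : ℝ))
    exact this.congr_fun fun n => by rw [mul_div_assoc]
  have htotal := hasSum_sum hterm
  have hfun : ∀ n : ℕ,
      (Real.cos (π * (n + 1) * τ')) ^ (-a) * (Real.sin (π * (n + 1) * τ')) ^ (-b)
          / ((n : ℝ) + 1) ^ s
        = ∑ k ∈ F, (c k : ℝ) * trigE (Nat.bodd B) k (π * ((n : ℝ) + 1) * τ')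
            / ((n : ℝ) + 1) ^ S := by
    intro n
    rw [show (-a) = ((A : ℕ) : ℤ) by omega, show (-b) = ((B : ℕ) : ℤ) by omega,
      zpow_natCast, zpow_natCast, show s = ((S : ℕ) : ℤ) by omega, zpow_natCast,
      hrep (π * ((n : ℝ) + 1) * τ'),
      finsum_eq_sum_of_support_subset _ (s := F) ?_, Finset.sum_div]
    intro k hk
    have : c k ≠ 0 := by
      intro h0
      simp only [Function.mem_support, h0] at hk
      exact hk (by simp)
    simpa [hF] using this
  rw [(htotal.congr_fun hfun).tsum_eq]
  rw [show (π : ℝ) ^ s = π ^ S by rw [← hSs, zpow_natCast], map_sum, Finset.mul_sum]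
  refine Finset.sum_congr rfl fun k hk => ?_
  simp only [map_mul, map_sub, Polynomial.aeval_C, Polynomial.aeval_X, Polynomial.aeval_comp]
  rw [← bernoulliFun_eq_aeval]
  simp only [eq_ratCast]
  push_cast
  rw [show (k : ℝ) / 2 * τ' - (N k : ℝ) = (k : ℝ) * τ' / 2 - (N k : ℝ) by ring]
  ring
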